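/- In the simplified case n = m = p = 1 (so rank matrices are natural numbers and gauges are trivial at e₁), horizontal composition of 2-morphisms in 2SVect_cc reduces to the Kronecker product: for T an r' × r matrix and T̃ an r̃' × r̃ matrix (r, r', r̃, r̃' ≥ 1), (T̃ ∘ T) = s̃'(r') · (T̃ ⊗ T) · s̃(r)⁻¹, and this composition is strictly associative: given a third 2-morphism T̂ : (r̂, ŝ) ⟹ (r̂', ŝ') : 1 → 1, one has (T̂ ∘ T̃) ∘ T = T̂ ∘ (T̃ ∘ T), using the composition law for gauges (ŝ ∗ s̃)(a) = ŝ(r̃ a) · (Id_{r̂} ⊗ s̃(a)) · (ŝ(r̃)⁻¹ ⊗ Id_a). -/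
import Mathlib


open Matrix
open scoped Kronecker

lemma reindex_mul3 {l m n l' m' n' : Type*} [Fintype m] [Fintype m']
    (e : l ≃ l') (f : m ≃ m') (g : n ≃ n')
    (A : Matrix l m ℂ) (B : Matrix m n ℂ) :
    Matrix.reindex e g (A * B) = Matrix.reindex e f A * Matrix.reindex f g B := by
  rw [Matrix.reindex_apply, Matrix.reindex_apply, Matrix.reindex_apply,
      Matrix.submatrix_mul_equiv]

lemma reindex_one' {l l' : Type*} [Fintype l] [Fintype l'] [DecidableEq l] [DecidableEq l']
    (e : l ≃ l') : Matrix.reindex e e (1 : Matrix l l ℂ) = 1 := by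
  rw [Matrix.reindex_apply, Matrix.submatrix_one_equiv]

lemma reindex_mul_mul {l m n o l' m' n' o' : Type*} [Fintype m] [Fintype n]
    [Fintype m'] [Fintype n']
    (e : l ≃ l') (f : m ≃ m') (g : n ≃ n') (h : o ≃ o')
    (A : Matrix l m ℂ) (B : Matrix m n ℂ) (C : Matrix n o ℂ) :
    Matrix.reindex e h (A * B * C) =
      Matrix.reindex e f A * Matrix.reindex f g B * Matrix.reindex g h C := by
  rw [reindex_mul3 e g h (A * B) C, reindex_mul3 e f g A B]


lemma fin_assoc_equiv (a b c : ℕ) :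
    ((finProdFinEquiv : Fin a × Fin b ≃ _).prodCongr (Equiv.refl (Fin c))).trans
        (finProdFinEquiv : Fin (a*b) × Fin c ≃ Fin (a*b*c)) =
      (Equiv.prodAssoc (Fin a) (Fin b) (Fin c)).trans
        (((Equiv.refl (Fin a)).prodCongr (finProdFinEquiv : Fin b × Fin c ≃ _)).trans
          ((finProdFinEquiv : Fin a × Fin (b*c) ≃ _).trans (finCongr (mul_assoc a b c).symm))) := by
  apply Equiv.ext
  rintro ⟨⟨u, v⟩, w⟩
  apply Fin.val_injective
  simp [finProdFinEquiv, Equiv.prodAssoc, finCongr]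
  ring

lemma kron_core (a b c d e f : ℕ)
    (A : Matrix (Fin a) (Fin d) ℂ) (B : Matrix (Fin b) (Fin e) ℂ)
    (C : Matrix (Fin c) (Fin f) ℂ) :
    Matrix.reindex finProdFinEquiv finProdFinEquiv
        ((Matrix.reindex finProdFinEquiv finProdFinEquiv (A ⊗ₖ B)) ⊗ₖ C) =
      Matrix.reindex (finCongr (mul_assoc a b c).symm) (finCongr (mul_assoc d e f).symm)
        (Matrix.reindex finProdFinEquiv finProdFinEquiv
          (A ⊗ₖ Matrix.reindex finProdFinEquiv finProdFinEquiv (B ⊗ₖ C))) := by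
  rw [Matrix.kroneckerMap_reindex_left, Matrix.kroneckerMap_reindex_right,
      ← Matrix.kronecker_assoc]
  simp only [Matrix.reindex_apply, Matrix.submatrix_submatrix]
  ext x y
  obtain ⟨⟨h11, h12⟩, h13⟩ :=
    (by simpa using congrArg (fun q : _ ≃ _ => q.symm x) (fin_assoc_equiv a b c) :
      (x.divNat.divNat = ((Fin.cast (mul_assoc a b c) x).divNat) ∧
        x.divNat.modNat = ((Fin.cast (mul_assoc a b c) x).modNat.divNat)) ∧
      x.modNat = (Fin.cast (mul_assoc a b c) x).modNat.modNat)
  obtain ⟨⟨h21, h22⟩, h23⟩ :=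
    (by simpa using congrArg (fun q : _ ≃ _ => q.symm y) (fin_assoc_equiv d e f) :
      (y.divNat.divNat = ((Fin.cast (mul_assoc d e f) y).divNat) ∧
        y.divNat.modNat = ((Fin.cast (mul_assoc d e f) y).modNat.divNat)) ∧
      y.modNat = (Fin.cast (mul_assoc d e f) y).modNat.modNat)
  simp [Matrix.submatrix_apply, mul_assoc, h11, h12, h13, h21, h22, h23]

/-- Horizontal composition of 2-morphisms in `2SVect_cc` in the case `n = m = p = 1`:
`(T̃ ∘ T) = s̃'(r') · (T̃ ⊗ T) · s̃(r)⁻¹` (Kronecker product, written with the canonical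
identification `Fin r̃' × Fin r' ≃ Fin (r̃'·r')`). -/
noncomputable def hcomp1 (r r' rt rt' : ℕ)
    (st : ∀ a : ℕ, Matrix (Fin (rt * a)) (Fin (rt * a)) ℂ)
    (st' : ∀ a : ℕ, Matrix (Fin (rt' * a)) (Fin (rt' * a)) ℂ)
    (Tt : Matrix (Fin rt') (Fin rt) ℂ) (T : Matrix (Fin r') (Fin r) ℂ) :
    Matrix (Fin (rt' * r')) (Fin (rt * r)) ℂ :=
  st' r' * Matrix.reindex finProdFinEquiv finProdFinEquiv (Tt ⊗ₖ T) * (st r)⁻¹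

/-- The composition law for gauges (case `n = m = p = 1`, where the permutation
matrices `P` are identities): `(ŝ ∗ s̃)(a) = ŝ(r̃a) · (Id_{r̂} ⊗ s̃(a)) · (ŝ(r̃)⁻¹ ⊗ Id_a)`. -/
noncomputable def gcomp (rh rt : ℕ)
    (sh : ∀ a : ℕ, Matrix (Fin (rh * a)) (Fin (rh * a)) ℂ)
    (st : ∀ a : ℕ, Matrix (Fin (rt * a)) (Fin (rt * a)) ℂ) :
    ∀ a : ℕ, Matrix (Fin (rh * rt * a)) (Fin (rh * rt * a)) ℂ := fun a =>
  (Matrix.reindex (finCongr (mul_assoc rh rt a).symm) (finCongr (mul_assoc rh rt a).symm)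
      (sh (rt * a) *
        Matrix.reindex finProdFinEquiv finProdFinEquiv
          ((1 : Matrix (Fin rh) (Fin rh) ℂ) ⊗ₖ st a))) *
    Matrix.reindex finProdFinEquiv finProdFinEquiv
      ((sh rt)⁻¹ ⊗ₖ (1 : Matrix (Fin a) (Fin a) ℂ))

/-- in the case `n = m = p = 1`, horizontal composition in `2SVect_cc`
reduces to a gauge-conjugated Kronecker product, and it is strictly associative:
`(T̂ ∘ T̃) ∘ T = T̂ ∘ (T̃ ∘ T)` (up to the canonical identification
`r̂'·(r̃'·r') = (r̂'·r̃')·r'`), using the gauge composition law `gcomp`. -/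
theorem stmt17 (r r' rt rt' rh rh' : ℕ)
    (hr : 1 ≤ r) (hr' : 1 ≤ r') (hrt : 1 ≤ rt) (hrt' : 1 ≤ rt') (hrh : 1 ≤ rh)
    (hrh' : 1 ≤ rh')
    (s : ∀ a : ℕ, Matrix (Fin (r * a)) (Fin (r * a)) ℂ)
    (s' : ∀ a : ℕ, Matrix (Fin (r' * a)) (Fin (r' * a)) ℂ)
    (st : ∀ a : ℕ, Matrix (Fin (rt * a)) (Fin (rt * a)) ℂ)
    (st' : ∀ a : ℕ, Matrix (Fin (rt' * a)) (Fin (rt' * a)) ℂ)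
    (sh : ∀ a : ℕ, Matrix (Fin (rh * a)) (Fin (rh * a)) ℂ)
    (sh' : ∀ a : ℕ, Matrix (Fin (rh' * a)) (Fin (rh' * a)) ℂ)
    (hs : ∀ a, 1 ≤ a → IsUnit (s a)) (hs' : ∀ a, 1 ≤ a → IsUnit (s' a))
    (hst : ∀ a, 1 ≤ a → IsUnit (st a)) (hst' : ∀ a, 1 ≤ a → IsUnit (st' a))
    (hsh : ∀ a, 1 ≤ a → IsUnit (sh a)) (hsh' : ∀ a, 1 ≤ a → IsUnit (sh' a))
    (hns : s 1 = 1) (hns' : s' 1 = 1) (hnst : st 1 = 1) (hnst' : st' 1 = 1)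
    (hnsh : sh 1 = 1) (hnsh' : sh' 1 = 1)
    (T : Matrix (Fin r') (Fin r) ℂ) (Tt : Matrix (Fin rt') (Fin rt) ℂ)
    (Th : Matrix (Fin rh') (Fin rh) ℂ) :
    (hcomp1 r r' rt rt' st st' Tt T =
      st' r' * Matrix.reindex finProdFinEquiv finProdFinEquiv (Tt ⊗ₖ T) * (st r)⁻¹) ∧
    (hcomp1 r r' (rh * rt) (rh' * rt') (gcomp rh rt sh st) (gcomp rh' rt' sh' st')
        (hcomp1 rt rt' rh rh' sh sh' Th Tt) T =
      Matrix.reindex (finCongr (mul_assoc rh' rt' r').symm)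
        (finCongr (mul_assoc rh rt r).symm)
        (hcomp1 (rt * r) (rt' * r') rh rh' sh sh' Th
          (hcomp1 r r' rt rt' st st' Tt T))) := by
  refine ⟨rfl, ?_⟩
  have hV'd : IsUnit (sh' rt').det := (Matrix.isUnit_iff_isUnit_det _).1 (hsh' rt' hrt')
  have hVd : IsUnit (sh rt).det := (Matrix.isUnit_iff_isUnit_det _).1 (hsh rt hrt)
  simp only [hcomp1, gcomp]
  have hmid : (sh' rt' * Matrix.reindex finProdFinEquiv finProdFinEquiv (Th ⊗ₖ Tt) * (sh rt)⁻¹) ⊗ₖ T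
      = (sh' rt' ⊗ₖ (1 : Matrix (Fin r') (Fin r') ℂ)) *
        ((Matrix.reindex finProdFinEquiv finProdFinEquiv (Th ⊗ₖ Tt)) ⊗ₖ T) *
        ((sh rt)⁻¹ ⊗ₖ (1 : Matrix (Fin r) (Fin r) ℂ)) := by
    conv_lhs => rw [show T = (1 : Matrix (Fin r') (Fin r') ℂ) * T * (1 : Matrix (Fin r) (Fin r) ℂ) by rw [Matrix.one_mul, Matrix.mul_one]]
    rw [Matrix.mul_kronecker_mul, Matrix.mul_kronecker_mul]
  have hmid2 : Th ⊗ₖ (st' r' * Matrix.reindex finProdFinEquiv finProdFinEquiv (Tt ⊗ₖ T) * (st r)⁻¹)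
      = ((1 : Matrix (Fin rh') (Fin rh') ℂ) ⊗ₖ st' r') *
        (Th ⊗ₖ Matrix.reindex finProdFinEquiv finProdFinEquiv (Tt ⊗ₖ T)) *
        ((1 : Matrix (Fin rh) (Fin rh) ℂ) ⊗ₖ (st r)⁻¹) := by
    conv_lhs => rw [show Th = (1 : Matrix (Fin rh') (Fin rh') ℂ) * Th * (1 : Matrix (Fin rh) (Fin rh) ℂ) by rw [Matrix.one_mul, Matrix.mul_one]]
    rw [Matrix.mul_kronecker_mul, Matrix.mul_kronecker_mul]
  have hginv : (Matrix.reindex (finCongr (mul_assoc rh rt r).symm) (finCongr (mul_assoc rh rt r).symm)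
        (sh (rt * r) * Matrix.reindex finProdFinEquiv finProdFinEquiv
          ((1 : Matrix (Fin rh) (Fin rh) ℂ) ⊗ₖ st r)) *
      Matrix.reindex finProdFinEquiv finProdFinEquiv
        ((sh rt)⁻¹ ⊗ₖ (1 : Matrix (Fin r) (Fin r) ℂ)))⁻¹
      = Matrix.reindex finProdFinEquiv finProdFinEquiv
          (sh rt ⊗ₖ (1 : Matrix (Fin r) (Fin r) ℂ)) *
        Matrix.reindex (finCongr (mul_assoc rh rt r).symm) (finCongr (mul_assoc rh rt r).symm)
          (Matrix.reindex finProdFinEquiv finProdFinEquiv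
            ((1 : Matrix (Fin rh) (Fin rh) ℂ) ⊗ₖ (st r)⁻¹) * (sh (rt * r))⁻¹) := by
    rw [Matrix.mul_inv_rev, Matrix.inv_reindex, Matrix.inv_kronecker, inv_one,
        Matrix.nonsing_inv_nonsing_inv _ hVd, Matrix.inv_reindex, Matrix.mul_inv_rev,
        Matrix.inv_reindex, Matrix.inv_kronecker, inv_one]
  rw [hmid, hmid2, hginv]
  rw [reindex_mul_mul finProdFinEquiv finProdFinEquiv finProdFinEquiv finProdFinEquiv
        (sh' rt' ⊗ₖ (1 : Matrix (Fin r') (Fin r') ℂ))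
        ((Matrix.reindex finProdFinEquiv finProdFinEquiv (Th ⊗ₖ Tt)) ⊗ₖ T)
        ((sh rt)⁻¹ ⊗ₖ (1 : Matrix (Fin r) (Fin r) ℂ))]
  rw [reindex_mul_mul finProdFinEquiv finProdFinEquiv finProdFinEquiv finProdFinEquiv
        ((1 : Matrix (Fin rh') (Fin rh') ℂ) ⊗ₖ st' r')
        (Th ⊗ₖ Matrix.reindex finProdFinEquiv finProdFinEquiv (Tt ⊗ₖ T))
        ((1 : Matrix (Fin rh) (Fin rh) ℂ) ⊗ₖ (st r)⁻¹)]
  have hc1 : ∀ {ν : Type} (X : Matrix (Fin (rh' * rt' * r')) ν ℂ),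
      Matrix.reindex finProdFinEquiv finProdFinEquiv
          ((sh' rt')⁻¹ ⊗ₖ (1 : Matrix (Fin r') (Fin r') ℂ)) *
        (Matrix.reindex finProdFinEquiv finProdFinEquiv
          (sh' rt' ⊗ₖ (1 : Matrix (Fin r') (Fin r') ℂ)) * X) = X := by
    intro ν X
    rw [← Matrix.mul_assoc, ← reindex_mul3 _ finProdFinEquiv _, ← Matrix.mul_kronecker_mul,
        Matrix.nonsing_inv_mul _ hV'd, Matrix.one_mul, Matrix.one_kronecker_one,
        reindex_one', Matrix.one_mul]
  have hc2 : ∀ {ν : Type} (X : Matrix (Fin (rh * rt * r)) ν ℂ),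
      Matrix.reindex finProdFinEquiv finProdFinEquiv
          ((sh rt)⁻¹ ⊗ₖ (1 : Matrix (Fin r) (Fin r) ℂ)) *
        (Matrix.reindex finProdFinEquiv finProdFinEquiv
          (sh rt ⊗ₖ (1 : Matrix (Fin r) (Fin r) ℂ)) * X) = X := by
    intro ν X
    rw [← Matrix.mul_assoc, ← reindex_mul3 _ finProdFinEquiv _, ← Matrix.mul_kronecker_mul,
        Matrix.nonsing_inv_mul _ hVd, Matrix.one_mul, Matrix.one_kronecker_one,
        reindex_one', Matrix.one_mul]
  have hregroup :
      sh' (rt' * r') *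
          (Matrix.reindex finProdFinEquiv finProdFinEquiv
              ((1 : Matrix (Fin rh') (Fin rh') ℂ) ⊗ₖ st' r') *
            Matrix.reindex finProdFinEquiv finProdFinEquiv
              (Th ⊗ₖ Matrix.reindex finProdFinEquiv finProdFinEquiv (Tt ⊗ₖ T)) *
            Matrix.reindex finProdFinEquiv finProdFinEquiv
              ((1 : Matrix (Fin rh) (Fin rh) ℂ) ⊗ₖ (st r)⁻¹)) *
          (sh (rt * r))⁻¹ =
        (sh' (rt' * r') *
            Matrix.reindex finProdFinEquiv finProdFinEquiv
              ((1 : Matrix (Fin rh') (Fin rh') ℂ) ⊗ₖ st' r')) *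
          Matrix.reindex finProdFinEquiv finProdFinEquiv
            (Th ⊗ₖ Matrix.reindex finProdFinEquiv finProdFinEquiv (Tt ⊗ₖ T)) *
          (Matrix.reindex finProdFinEquiv finProdFinEquiv
              ((1 : Matrix (Fin rh) (Fin rh) ℂ) ⊗ₖ (st r)⁻¹) *
            (sh (rt * r))⁻¹) := by
    simp only [Matrix.mul_assoc]
  rw [hregroup,
      reindex_mul_mul (finCongr (mul_assoc rh' rt' r').symm) (finCongr (mul_assoc rh' rt' r').symm)
        (finCongr (mul_assoc rh rt r).symm) (finCongr (mul_assoc rh rt r).symm),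
      kron_core rh' rt' r' rh rt r Th Tt T]
  simp only [Matrix.mul_assoc]
  rw [hc1, hc2]
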